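/- arXiv:1106.4852 — 2 statements merged into one kernel-verified Lean document; each statement's English description precedes it below -/
import Mathlib

section
/- Let f₁, f₂ : ℝ → ℂ be measurable, let C > 0 and α ∈ (1/2, 1], and suppose that ∫₀^T |fᵢ(s)|² ds ≤ C·T^{1−α} for every T > 0 and i = 1,2. Then for every T ≥ 1, ∫₀¹ (∫₁^T |f₁(t)|²·|f₂(θt)|² dt) dθ ≤ C²·(α − (1−α)·T^{1−2α})/(2α − 1). -/
open MeasureTheory Set
open scoped ENNReal Interval

private lemma lint_scale (g : ℝ → ℝ≥0∞) (hg : Measurable g) {t : ℝ} (ht : 0 < t) :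
    (∫⁻ θ in Icc (0:ℝ) 1, g (θ * t)) = ENNReal.ofReal t⁻¹ * ∫⁻ u in Ioc (0:ℝ) t, g u := by
  have h1 : (∫⁻ θ in Icc (0:ℝ) 1, g (θ * t)) = ∫⁻ θ in Ioc (0:ℝ) 1, g (θ * t) :=
    (setLIntegral_congr Ioc_ae_eq_Icc).symm
  rw [h1, ← lintegral_indicator measurableSet_Ioc]
  have h2 : ∀ θ : ℝ, (Ioc (0:ℝ) 1).indicator (fun θ => g (θ * t)) θ
      = (Ioc (0:ℝ) t).indicator g (θ * t) := by
    intro θ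
    by_cases h : θ ∈ Ioc (0:ℝ) 1
    · rw [indicator_of_mem h, indicator_of_mem]
      exact ⟨mul_pos h.1 ht, by nlinarith [h.2]⟩
    · rw [indicator_of_notMem h, indicator_of_notMem]
      intro hc
      refine h ⟨?_, ?_⟩
      · by_contra h'
        push_neg at h'
        nlinarith [hc.1]
      · have h2 := hc.2
        have : θ * t ≤ 1 * t := by linarith [hc.2]
        exact le_of_mul_le_mul_right this ht
  simp_rw [h2]
  calc (∫⁻ θ : ℝ, (Ioc (0:ℝ) t).indicator g (θ * t))
      = ∫⁻ u, (Ioc (0:ℝ) t).indicator g u ∂(Measure.map (· * t) volume) :=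
        (lintegral_map (hg.indicator measurableSet_Ioc) (measurable_mul_const t)).symm
    _ = ENNReal.ofReal |t⁻¹| * ∫⁻ u, (Ioc (0:ℝ) t).indicator g u := by
        rw [Real.map_volume_mul_right ht.ne', lintegral_smul_measure, smul_eq_mul]
    _ = ENNReal.ofReal t⁻¹ * ∫⁻ u in Ioc (0:ℝ) t, g u := by
        rw [abs_of_pos (inv_pos.2 ht), lintegral_indicator measurableSet_Ioc]

private lemma lint_rpow {a b r : ℝ} (ha : 0 < a) (hab : a ≤ b) (hr : r ≠ -1) :
    (∫⁻ s in Ioc a b, ENNReal.ofReal (s ^ r))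
      = ENNReal.ofReal ((b ^ (r + 1) - a ^ (r + 1)) / (r + 1)) := by
  have hb : 0 < b := ha.trans_le hab
  have h0 : (0:ℝ) ∉ Set.uIcc a b := notMem_uIcc_of_lt ha hb
  have hint : IntervalIntegrable (fun s : ℝ => s ^ r) volume a b :=
    intervalIntegral.intervalIntegrable_rpow (Or.inr h0)
  rw [← ofReal_integral_eq_lintegral_ofReal]
  · rw [← intervalIntegral.integral_of_le hab, integral_rpow (Or.inr ⟨hr, h0⟩)]
  · exact (intervalIntegrable_iff_integrableOn_Ioc_of_le hab).1 hint
  · filter_upwards [ae_restrict_mem measurableSet_Ioc] with s hs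
    exact Real.rpow_nonneg (ha.trans hs.1).le r

private lemma key_bound (φ : ℝ → ℝ≥0∞) (hφ : Measurable φ) (C α T : ℝ) (hC : 0 < C)
    (hα : 1/2 < α) (hT : 1 ≤ T)
    (hb : ∀ s : ℝ, 0 < s → (∫⁻ t in Ioc (0:ℝ) s, φ t) ≤ ENNReal.ofReal (C * s ^ (1 - α))) :
    (∫⁻ t in Ioc (1:ℝ) T, φ t * ENNReal.ofReal (C * t ^ (-α)))
      ≤ ENNReal.ofReal (C ^ 2 * (α - (1 - α) * T ^ (1 - 2 * α)) / (2 * α - 1)) := by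
  have hα0 : 0 < α := by linarith
  have hT0 : (0:ℝ) < T := by linarith
  set ψ : ℝ → ℝ≥0∞ := fun s => ENNReal.ofReal (s ^ (-α - 1)) with hψdef
  have hψ : Measurable ψ := by measurability
  -- pointwise identity
  have hpt : ∀ t ∈ Ioc (1:ℝ) T,
      φ t * ENNReal.ofReal (C * t ^ (-α))
        = ENNReal.ofReal (C * T ^ (-α)) * φ t
          + ENNReal.ofReal (C * α) * (φ t * ∫⁻ s in Ioc t T, ψ s) := by
    intro t ht
    have ht0 : 0 < t := lt_trans one_pos ht.1
    have htT : t ≤ T := ht.2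
    have hI : (∫⁻ s in Ioc t T, ψ s)
        = ENNReal.ofReal ((t ^ (-α) - T ^ (-α)) / α) := by
      rw [hψdef]
      rw [lint_rpow ht0 htT (by intro h; linarith)]
      congr 1
      have h1 : -α - 1 + 1 = -α := by ring
      rw [h1, div_neg, ← neg_div, neg_sub]
    have hmono : T ^ (-α) ≤ t ^ (-α) :=
      Real.rpow_le_rpow_of_nonpos ht0 htT (by linarith)
    have e1 : C * t ^ (-α) = C * T ^ (-α) + (C * α) * ((t ^ (-α) - T ^ (-α)) / α) := by
      field_simp
      ring
    have hnn : 0 ≤ (t ^ (-α) - T ^ (-α)) / α :=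
      div_nonneg (sub_nonneg.2 hmono) hα0.le
    have e2 : ENNReal.ofReal (C * t ^ (-α))
        = ENNReal.ofReal (C * T ^ (-α))
          + ENNReal.ofReal (C * α) * ENNReal.ofReal ((t ^ (-α) - T ^ (-α)) / α) := by
      rw [e1, ENNReal.ofReal_add (by positivity) (mul_nonneg (by positivity) hnn)]
      congr 1
      exact ENNReal.ofReal_mul (by positivity)
    rw [e2, hI]
    ring
  rw [setLIntegral_congr_fun measurableSet_Ioc hpt,
    lintegral_add_left (hφ.const_mul _),
    lintegral_const_mul' _ _ ENNReal.ofReal_ne_top,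
    lintegral_const_mul' _ _ ENNReal.ofReal_ne_top]
  -- bound for the first term
  have I1 : (∫⁻ t in Ioc (1:ℝ) T, φ t) ≤ ENNReal.ofReal (C * T ^ (1 - α)) :=
    le_trans (lintegral_mono_set (Ioc_subset_Ioc_left (by norm_num))) (hb T hT0)
  -- bound for the second term
  have hJ : (∫⁻ t in Ioc (1:ℝ) T, φ t * ∫⁻ s in Ioc t T, ψ s)
      ≤ ENNReal.ofReal (C * ((1 - T ^ (1 - 2 * α)) / (2 * α - 1))) := by
    have hinner : ∀ t ∈ Ioc (1:ℝ) T,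
        φ t * (∫⁻ s in Ioc t T, ψ s)
          = ∫⁻ s in Ioc (1:ℝ) T, φ t * (Ioi t).indicator ψ s := by
      intro t ht
      rw [lintegral_const_mul _ (hψ.indicator measurableSet_Ioi)]
      congr 1
      rw [setLIntegral_indicator measurableSet_Ioi]
      have hset : Ioi t ∩ Ioc (1:ℝ) T = Ioc t T := by
        ext s
        simp only [mem_inter_iff, mem_Ioi, mem_Ioc]
        constructor
        · rintro ⟨h1, _, h3⟩; exact ⟨h1, h3⟩
        · rintro ⟨h1, h2⟩; exact ⟨h1, lt_trans ht.1 h1, h2⟩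
      rw [hset]
    rw [setLIntegral_congr_fun measurableSet_Ioc hinner]
    have hmeas : AEMeasurable (Function.uncurry fun t s => φ t * (Ioi t).indicator ψ s)
        ((volume.restrict (Ioc (1:ℝ) T)).prod (volume.restrict (Ioc (1:ℝ) T))) := by
      refine Measurable.aemeasurable ?_
      have : (Function.uncurry fun t s => φ t * (Ioi t).indicator ψ s)
          = fun p : ℝ × ℝ => φ p.1 * (if p.1 < p.2 then ψ p.2 else 0) := by
        ext p
        simp [Function.uncurry, indicator_apply]
      rw [this]
      exact (hφ.comp measurable_fst).mul
        (Measurable.ite (measurableSet_lt measurable_fst measurable_snd)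
          (hψ.comp measurable_snd) measurable_const)
    rw [lintegral_lintegral_swap hmeas]
    have hin2 : ∀ s ∈ Ioc (1:ℝ) T,
        (∫⁻ t in Ioc (1:ℝ) T, φ t * (Ioi t).indicator ψ s)
          ≤ ENNReal.ofReal (C * s ^ (-(2 * α))) := by
      intro s hs
      have hs0 : (0:ℝ) < s := lt_trans one_pos hs.1
      have h1 : ∀ t : ℝ, φ t * (Ioi t).indicator ψ s
          = (Iio s).indicator (fun t => φ t * ψ s) t := by
        intro t
        by_cases h : t < s <;> simp [indicator_apply, h]
      simp_rw [h1]
      rw [setLIntegral_indicator measurableSet_Iio]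
      calc (∫⁻ t in Iio s ∩ Ioc (1:ℝ) T, φ t * ψ s)
          = (∫⁻ t in Iio s ∩ Ioc (1:ℝ) T, φ t) * ψ s :=
            lintegral_mul_const' _ _ ENNReal.ofReal_ne_top
        _ ≤ ENNReal.ofReal (C * s ^ (1 - α)) * ψ s := by
            refine mul_le_mul_left (le_trans (lintegral_mono_set ?_) (hb s hs0)) _
            intro x hx
            exact ⟨lt_trans one_pos hx.2.1, hx.1.le⟩
        _ = ENNReal.ofReal (C * s ^ (-(2 * α))) := by
            rw [hψdef, ← ENNReal.ofReal_mul (by positivity)]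
            congr 1
            have h2 : (1 - α) + (-α - 1) = -(2 * α) := by ring
            rw [mul_assoc, ← Real.rpow_add hs0, h2]
    refine le_trans (setLIntegral_mono' measurableSet_Ioc hin2) ?_
    have hCo : ∀ s : ℝ, ENNReal.ofReal (C * s ^ (-(2 * α)))
        = ENNReal.ofReal C * ENNReal.ofReal (s ^ (-(2 * α))) := fun s =>
      ENNReal.ofReal_mul hC.le
    simp_rw [hCo]
    rw [lintegral_const_mul' _ _ ENNReal.ofReal_ne_top,
      lint_rpow one_pos hT (by intro h; linarith)]
    rw [← ENNReal.ofReal_mul hC.le]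
    have h3 : -(2 * α) + 1 = 1 - 2 * α := by ring
    rw [h3, Real.one_rpow]
    apply le_of_eq
    congr 1
    have hd : (1 : ℝ) - 2 * α ≠ 0 := by intro h; linarith
    have hd2 : (2 : ℝ) * α - 1 ≠ 0 := by intro h; linarith
    field_simp
    ring
  -- combine
  refine le_trans (add_le_add (mul_le_mul_right I1 _) (mul_le_mul_right hJ _)) ?_
  have hX1 : T ^ (1 - 2 * α) ≤ 1 :=
    Real.rpow_le_one_of_one_le_of_nonpos hT (by linarith)
  have hd : (0:ℝ) < 2 * α - 1 := by linarith
  rw [← ENNReal.ofReal_mul (by positivity), ← ENNReal.ofReal_mul (by positivity),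
    ← ENNReal.ofReal_add (by positivity)
      (mul_nonneg (by positivity) (mul_nonneg hC.le (div_nonneg (by linarith) hd.le)))]
  apply ENNReal.ofReal_le_ofReal
  apply le_of_eq
  have hTT : T ^ (-α) * T ^ (1 - α) = T ^ (1 - 2 * α) := by
    rw [← Real.rpow_add hT0]
    congr 1
    ring
  have expand : C * T ^ (-α) * (C * T ^ (1 - α))
      = C ^ 2 * (T ^ (-α) * T ^ (1 - α)) := by ring
  rw [expand, hTT]
  field_simp
  ring

/-- If `f₁, f₂ : ℝ → ℂ` are measurable and
`∫₀^T |fᵢ(s)|² ds ≤ C T^(1-α)` for every `T > 0` and `i = 1, 2` (with `C > 0`,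
`α ∈ (1/2, 1]`), then for every `T ≥ 1`,
`∫₀¹ ∫₁^T |f₁(t)|² |f₂(θt)|² dt dθ ≤ C² (α - (1-α) T^(1-2α))/(2α-1)`. -/
theorem double_integral_L2_bound
    (f₁ f₂ : ℝ → ℂ) (hf₁ : Measurable f₁) (hf₂ : Measurable f₂)
    (C α : ℝ) (hC : 0 < C) (hα : α ∈ Set.Ioc (1/2 : ℝ) 1)
    (hbound₁ : ∀ T : ℝ, 0 < T →
      (∫⁻ s in Ioc (0:ℝ) T, ENNReal.ofReal (‖f₁ s‖ ^ 2)) ≤ ENNReal.ofReal (C * T ^ (1 - α)))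
    (hbound₂ : ∀ T : ℝ, 0 < T →
      (∫⁻ s in Ioc (0:ℝ) T, ENNReal.ofReal (‖f₂ s‖ ^ 2)) ≤ ENNReal.ofReal (C * T ^ (1 - α))) :
    ∀ T : ℝ, 1 ≤ T →
      (∫⁻ θ in Icc (0:ℝ) 1, ∫⁻ t in Icc (1:ℝ) T,
          ENNReal.ofReal (‖f₁ t‖ ^ 2 * ‖f₂ (θ * t)‖ ^ 2))
        ≤ ENNReal.ofReal (C ^ 2 * (α - (1 - α) * T ^ (1 - 2 * α)) / (2 * α - 1)) := by
  intro T hT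
  have hT0 : (0:ℝ) < T := by linarith
  set g₁ : ℝ → ℝ≥0∞ := fun x => ENNReal.ofReal (‖f₁ x‖ ^ 2) with hg₁def
  set g₂ : ℝ → ℝ≥0∞ := fun x => ENNReal.ofReal (‖f₂ x‖ ^ 2) with hg₂def
  have hg₁ : Measurable g₁ := ENNReal.measurable_ofReal.comp (hf₁.norm.pow_const 2)
  have hg₂ : Measurable g₂ := ENNReal.measurable_ofReal.comp (hf₂.norm.pow_const 2)
  have hsplit : ∀ θ t : ℝ, ENNReal.ofReal (‖f₁ t‖ ^ 2 * ‖f₂ (θ * t)‖ ^ 2)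
      = g₁ t * g₂ (θ * t) := fun θ t => ENNReal.ofReal_mul (by positivity)
  simp_rw [hsplit]
  have hmeas : AEMeasurable (Function.uncurry fun θ t => g₁ t * g₂ (θ * t))
      ((volume.restrict (Icc (0:ℝ) 1)).prod (volume.restrict (Icc (1:ℝ) T))) := by
    refine Measurable.aemeasurable ?_
    exact (hg₁.comp measurable_snd).mul (hg₂.comp (measurable_fst.mul measurable_snd))
  rw [lintegral_lintegral_swap hmeas]
  refine le_trans (le_of_eq (setLIntegral_congr Ioc_ae_eq_Icc).symm) ?_
  have hin : ∀ t ∈ Ioc (1:ℝ) T,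
      (∫⁻ θ in Icc (0:ℝ) 1, g₁ t * g₂ (θ * t))
        ≤ g₁ t * ENNReal.ofReal (C * t ^ (-α)) := by
    intro t ht
    have ht0 : (0:ℝ) < t := lt_trans one_pos ht.1
    have hne : g₁ t ≠ ⊤ := by rw [hg₁def]; exact ENNReal.ofReal_ne_top
    rw [lintegral_const_mul' _ _ hne]
    refine mul_le_mul_right ?_ (g₁ t)
    rw [lint_scale g₂ hg₂ ht0]
    calc ENNReal.ofReal t⁻¹ * ∫⁻ u in Ioc (0:ℝ) t, g₂ u
        ≤ ENNReal.ofReal t⁻¹ * ENNReal.ofReal (C * t ^ (1 - α)) :=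
          mul_le_mul_right (hbound₂ t ht0) _
      _ = ENNReal.ofReal (C * t ^ (-α)) := by
          rw [← ENNReal.ofReal_mul (inv_nonneg.2 ht0.le)]
          congr 1
          have h1 : t⁻¹ * (C * t ^ (1 - α)) = C * (t ^ (-1 : ℝ) * t ^ (1 - α)) := by
            rw [Real.rpow_neg_one]; ring
          have h2 : (-1 : ℝ) + (1 - α) = -α := by ring
          rw [h1, ← Real.rpow_add ht0, h2]
  refine le_trans (setLIntegral_mono' measurableSet_Ioc hin) ?_
  exact key_bound g₁ hg₁ C α T hC hα.1 hT hbound₁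
end

section
/- Let α > 1/2 and let μ₁, μ₂ be finite Borel measures on ℝ, each uniformly α-Hölder continuous. Then for Lebesgue-almost every θ ∈ (0,1], the convolution μ₁ ∗ (S_θ μ₂) is absolutely continuous with respect to Lebesgue measure on ℝ. -/
open MeasureTheory Set Filter
open scoped ENNReal NNReal

/-- A finite Borel measure `μ` on `ℝ` is uniformly `α`-Hölder continuous if there is a
constant `C > 0` with `μ(J) ≤ C |J|^α` for every interval `J` of length `< 1`. -/
def UniformlyHolder (α : ℝ) (μ : Measure ℝ) : Prop :=
  ∃ C : ℝ, 0 < C ∧ ∀ a b : ℝ, a ≤ b → b - a < 1 →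
    μ (Set.Icc a b) ≤ ENNReal.ofReal (C * (b - a) ^ α)

lemma holder_ball {α : ℝ} (hα0 : 0 < α) {μ : Measure ℝ} [IsFiniteMeasure μ]
    (h : UniformlyHolder α μ) :
    ∃ C : ℝ, 0 < C ∧ ∀ x r : ℝ, 0 ≤ r →
      μ (Metric.closedBall x r) ≤ ENNReal.ofReal (C * min r 1 ^ α) := by
  obtain ⟨C, hC, hH⟩ := h
  set M : ℝ := (μ Set.univ).toReal with hM
  have hM0 : 0 ≤ M := ENNReal.toReal_nonneg
  refine ⟨(C + M + 1) * 2 ^ α, by positivity, ?_⟩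
  intro x r hr
  rw [Real.closedBall_eq_Icc]
  have hmin0 : 0 ≤ min r 1 := le_min hr zero_le_one
  rcases lt_or_ge r (1/2) with hr2 | hr2
  · have hlen : (x + r) - (x - r) = 2 * r := by ring
    have := hH (x - r) (x + r) (by linarith) (by rw [hlen]; linarith)
    refine this.trans (ENNReal.ofReal_le_ofReal ?_)
    rw [hlen]
    have hmin : min r 1 = r := min_eq_left (by linarith)
    rw [hmin, Real.mul_rpow (by norm_num) hr]
    calc C * ((2:ℝ) ^ α * r ^ α) = C * 2 ^ α * r ^ α := by ring
      _ ≤ (C + M + 1) * 2 ^ α * r ^ α := by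
          have h2 : (0:ℝ) < 2 ^ α := Real.rpow_pos_of_pos (by norm_num) α
          have hrp : (0:ℝ) ≤ r ^ α := Real.rpow_nonneg hr α
          have : C ≤ C + M + 1 := by linarith
          exact mul_le_mul_of_nonneg_right
            (mul_le_mul_of_nonneg_right this h2.le) hrp
  · have h1 : μ (Icc (x - r) (x + r)) ≤ ENNReal.ofReal M := by
      rw [hM, ENNReal.ofReal_toReal (measure_ne_top μ _)]
      exact measure_mono (subset_univ _)
    refine h1.trans (ENNReal.ofReal_le_ofReal ?_)
    have hmin : (1:ℝ)/2 ≤ min r 1 := le_min hr2 (by norm_num)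
    have hrp : ((1:ℝ)/2) ^ α ≤ min r 1 ^ α :=
      Real.rpow_le_rpow (by norm_num) hmin hα0.le
    have h2 : ((1:ℝ)/2) ^ α * 2 ^ α = 1 := by
      rw [← Real.mul_rpow (by norm_num) (by norm_num)]
      norm_num
    have h2p : (0:ℝ) < 2 ^ α := Real.rpow_pos_of_pos (by norm_num) α
    calc M = M * (((1:ℝ)/2) ^ α * 2 ^ α) := by rw [h2]; ring
      _ ≤ M * (min r 1 ^ α * 2 ^ α) := by
          apply mul_le_mul_of_nonneg_left _ hM0
          exact mul_le_mul_of_nonneg_right hrp h2p.le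
      _ = M * 2 ^ α * min r 1 ^ α := by ring
      _ ≤ (C + M + 1) * 2 ^ α * min r 1 ^ α := by
          have hp : (0:ℝ) ≤ min r 1 ^ α := Real.rpow_nonneg hmin0 α
          have : M ≤ C + M + 1 := by linarith
          exact mul_le_mul_of_nonneg_right
            (mul_le_mul_of_nonneg_right this h2p.le) hp

lemma energy_bound {α C : ℝ} (hα : 1/2 < α) (hα1 : α < 1) {μ : Measure ℝ}
    [IsFiniteMeasure μ] (hC : 0 < C)
    (hH : ∀ x r : ℝ, 0 ≤ r →
      μ (Metric.closedBall x r) ≤ ENNReal.ofReal (C * min r 1 ^ α)) :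
    ∃ L : ℝ≥0∞, L ≠ ⊤ ∧ ∀ b : ℝ,
      ∫⁻ y, ENNReal.ofReal (|y - b| ^ (α - 1)) ∂μ ≤ L := by
  have hp : α / (α - 1) < -1 := by
    rw [div_lt_iff_of_neg (by linarith)]
    linarith
  set J : ℝ≥0∞ := ∫⁻ t in Ioi (1:ℝ), ENNReal.ofReal (C * t ^ (α / (α - 1))) with hJ
  have hJfin : J ≠ ⊤ := by
    have hint : IntegrableOn (fun t : ℝ => C * t ^ (α / (α - 1))) (Ioi 1) volume := by
      exact (integrableOn_Ioi_rpow_of_lt hp one_pos).const_mul C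
    have := hint.2
    rw [hasFiniteIntegral_iff_ofReal ?_] at this
    · exact this.ne
    · filter_upwards [self_mem_ae_restrict measurableSet_Ioi] with t ht
      have : (0:ℝ) < t := lt_trans one_pos ht
      positivity
  refine ⟨μ univ + J, by finiteness, fun b => ?_⟩
  have fmble : Measurable fun y : ℝ => |y - b| ^ (α - 1) :=
    by fun_prop
  rw [lintegral_eq_lintegral_meas_le μ
    (Eventually.of_forall fun y => Real.rpow_nonneg (abs_nonneg _) _) fmble.aemeasurable]
  have hsplit : Ioi (0:ℝ) = Ioc 0 1 ∪ Ioi 1 := (Ioc_union_Ioi_eq_Ioi zero_le_one).symm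
  rw [hsplit, lintegral_union measurableSet_Ioi Ioc_disjoint_Ioi_same]
  gcongr
  · calc ∫⁻ t in Ioc (0:ℝ) 1, μ {y | t ≤ |y - b| ^ (α - 1)}
        ≤ ∫⁻ _ in Ioc (0:ℝ) 1, μ univ := by
          exact lintegral_mono fun t => measure_mono (subset_univ _)
      _ = μ univ * volume (Ioc (0:ℝ) 1) := setLIntegral_const _ _
      _ ≤ μ univ := by simp [Real.volume_Ioc]
  · apply lintegral_mono_ae
    filter_upwards [self_mem_ae_restrict measurableSet_Ioi] with t (ht : 1 < t)
    have ht0 : (0:ℝ) < t := lt_trans one_pos ht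
    set r : ℝ := t ^ ((α - 1)⁻¹) with hr
    have hr0 : 0 ≤ r := (Real.rpow_pos_of_pos ht0 _).le
    have hr1 : r ≤ 1 :=
      Real.rpow_le_one_of_one_le_of_nonpos ht.le
        (by rw [inv_nonpos]; linarith)
    have hsub : {y : ℝ | t ≤ |y - b| ^ (α - 1)} ⊆ Metric.closedBall b r := by
      intro y hy
      simp only [mem_setOf_eq] at hy
      have hyb : y ≠ b := by
        rintro rfl
        rw [sub_self, abs_zero, Real.zero_rpow (by linarith : α - 1 ≠ 0)] at hy
        linarith
      have habs : 0 < |y - b| := abs_pos.mpr (sub_ne_zero.mpr hyb)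
      rw [Metric.mem_closedBall, Real.dist_eq]
      calc |y - b| = (|y - b| ^ (α - 1)) ^ ((α - 1)⁻¹) := by
            rw [← Real.rpow_mul habs.le, mul_inv_cancel₀ (by linarith : α - 1 ≠ 0),
              Real.rpow_one]
        _ ≤ r := by
            apply Real.rpow_le_rpow_of_nonpos ht0 hy
            rw [inv_nonpos]; linarith
    calc μ {y | t ≤ |y - b| ^ (α - 1)} ≤ μ (Metric.closedBall b r) := measure_mono hsub
      _ ≤ ENNReal.ofReal (C * min r 1 ^ α) := hH b r hr0
      _ = ENNReal.ofReal (C * t ^ (α / (α - 1))) := by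
          rw [min_eq_left hr1, hr, ← Real.rpow_mul ht0.le]
          congr 2
          field_simp

lemma phi_integral {α C : ℝ} (hα : 1/2 < α) (hα1 : α < 1) {μ : Measure ℝ}
    [IsFiniteMeasure μ] (hC : 0 < C)
    (hH : ∀ x r : ℝ, 0 ≤ r →
      μ (Metric.closedBall x r) ≤ ENNReal.ofReal (C * min r 1 ^ α)) :
    ∃ B : ℝ≥0∞, B ≠ ⊤ ∧ ∀ ε : ℝ, 0 < ε → ε ≤ 1 → ∀ b : ℝ,
      ∫⁻ y, min 1 (ENNReal.ofReal (2*ε) / ENNReal.ofReal |y - b|)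
          * ENNReal.ofReal (min (|y - b| + ε) 1 ^ α) ∂μ ≤ B * ENNReal.ofReal ε := by
  have hα0 : (0:ℝ) < α := by linarith
  obtain ⟨L, hLfin, hL⟩ := energy_bound hα hα1 hC hH
  refine ⟨ENNReal.ofReal (C * 2 ^ α) + ENNReal.ofReal (2 * 2 ^ α) * L, by finiteness, ?_⟩
  intro ε hε hε2 b
  set f : ℝ → ℝ≥0∞ := fun y =>
    min 1 (ENNReal.ofReal (2*ε) / ENNReal.ofReal |y - b|)
      * ENNReal.ofReal (min (|y - b| + ε) 1 ^ α) with hf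
  have hs : MeasurableSet (Metric.closedBall b ε) := Metric.isClosed_closedBall.measurableSet
  rw [← lintegral_add_compl f hs, add_mul]
  gcongr
  · -- near part
    calc ∫⁻ y in Metric.closedBall b ε, f y ∂μ
        ≤ ∫⁻ _ in Metric.closedBall b ε, ENNReal.ofReal ((2*ε) ^ α) ∂μ := by
          apply setLIntegral_mono' hs
          intro y hy
          rw [Metric.mem_closedBall, Real.dist_eq] at hy
          calc f y ≤ 1 * ENNReal.ofReal ((2*ε) ^ α) := by
                apply mul_le_mul' (min_le_left _ _)
                apply ENNReal.ofReal_le_ofReal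
                apply Real.rpow_le_rpow (le_min (by positivity) zero_le_one) _ hα0.le
                exact (min_le_left _ _).trans (by linarith)
            _ = ENNReal.ofReal ((2*ε) ^ α) := one_mul _
      _ = ENNReal.ofReal ((2*ε) ^ α) * μ (Metric.closedBall b ε) := setLIntegral_const _ _
      _ ≤ ENNReal.ofReal ((2*ε) ^ α) * ENNReal.ofReal (C * min ε 1 ^ α) := by
          gcongr
          exact hH b ε hε.le
      _ ≤ ENNReal.ofReal (C * 2 ^ α) * ENNReal.ofReal ε := by
          rw [← ENNReal.ofReal_mul (by positivity), ← ENNReal.ofReal_mul (by positivity)]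
          apply ENNReal.ofReal_le_ofReal
          rw [min_eq_left (by linarith), Real.mul_rpow (by norm_num) hε.le]
          have h2a : ε ^ α * ε ^ α = ε ^ (2*α) := by
            rw [← Real.rpow_add hε]; ring_nf
          have hle : ε ^ (2*α) ≤ ε := by
            nth_rewrite 2 [← Real.rpow_one ε]
            exact Real.rpow_le_rpow_of_exponent_ge hε (by linarith) (by linarith)
          calc (2:ℝ) ^ α * ε ^ α * (C * ε ^ α) = C * 2 ^ α * (ε ^ α * ε ^ α) := by ring
            _ = C * 2 ^ α * ε ^ (2*α) := by rw [h2a]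
            _ ≤ C * 2 ^ α * ε := by
                apply mul_le_mul_of_nonneg_left hle
                positivity
  · -- far part
    calc ∫⁻ y in (Metric.closedBall b ε)ᶜ, f y ∂μ
        ≤ ∫⁻ y in (Metric.closedBall b ε)ᶜ,
            ENNReal.ofReal (2 * 2 ^ α * ε) * ENNReal.ofReal (|y - b| ^ (α - 1)) ∂μ := by
          apply setLIntegral_mono' hs.compl
          intro y hy
          simp only [mem_compl_iff, Metric.mem_closedBall, Real.dist_eq, not_le] at hy
          have habs : (0:ℝ) < |y - b| := lt_trans hε hy
          have hmin2 : min (|y - b| + ε) 1 ≤ 2 * |y - b| := by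
            rcases le_total (|y - b| + ε) 1 with h | h
            · rw [min_eq_left h]; linarith
            · rw [min_eq_right h]; linarith
          calc f y ≤ (ENNReal.ofReal (2*ε) / ENNReal.ofReal |y - b|)
                * ENNReal.ofReal ((2 * |y - b|) ^ α) := by
                apply mul_le_mul' (min_le_right _ _)
                apply ENNReal.ofReal_le_ofReal
                exact Real.rpow_le_rpow (le_min (by positivity) zero_le_one) hmin2 hα0.le
            _ = ENNReal.ofReal (2*ε / |y - b|) * ENNReal.ofReal (2 ^ α * |y - b| ^ α) := by
                rw [ENNReal.ofReal_div_of_pos habs, Real.mul_rpow (by norm_num) habs.le]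
            _ = ENNReal.ofReal (2*ε / |y - b| * (2 ^ α * |y - b| ^ α)) := by
                rw [← ENNReal.ofReal_mul (by positivity)]
            _ = ENNReal.ofReal (2 * 2 ^ α * ε * |y - b| ^ (α - 1)) := by
                congr 1
                rw [Real.rpow_sub habs, Real.rpow_one]
                field_simp
            _ = ENNReal.ofReal (2 * 2 ^ α * ε) * ENNReal.ofReal (|y - b| ^ (α - 1)) := by
                rw [← ENNReal.ofReal_mul (by positivity)]
      _ = ENNReal.ofReal (2 * 2 ^ α * ε) *
            ∫⁻ y in (Metric.closedBall b ε)ᶜ, ENNReal.ofReal (|y - b| ^ (α - 1)) ∂μ := by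
          rw [lintegral_const_mul']
          exact ENNReal.ofReal_ne_top
      _ ≤ ENNReal.ofReal (2 * 2 ^ α * ε) * ∫⁻ y, ENNReal.ofReal (|y - b| ^ (α - 1)) ∂μ := by
          gcongr
          exact Measure.restrict_le_self
      _ ≤ ENNReal.ofReal (2 * 2 ^ α * ε) * L := by gcongr; exact hL b
      _ = ENNReal.ofReal (2 * 2 ^ α) * L * ENNReal.ofReal ε := by
          rw [ENNReal.ofReal_mul (by positivity)]
          ring

lemma theta_bound {ε : ℝ} (hε : 0 < ε) (c d : ℝ) :
    (volume : Measure ℝ).restrict (Ioc (0:ℝ) 1) {θ : ℝ | |c + θ * d| ≤ ε} ≤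
      (if |c| ≤ |d| + ε then min 1 (ENNReal.ofReal (2*ε) / ENNReal.ofReal |d|) else 0) := by
  have hmeas : MeasurableSet {θ : ℝ | |c + θ * d| ≤ ε} := by
    apply measurableSet_le (by fun_prop) measurable_const
  rw [Measure.restrict_apply hmeas]
  by_cases hcd : |c| ≤ |d| + ε
  · rw [if_pos hcd]
    apply le_min
    · calc volume ({θ : ℝ | |c + θ * d| ≤ ε} ∩ Ioc 0 1) ≤ volume (Ioc (0:ℝ) 1) :=
          measure_mono inter_subset_right
        _ = 1 := by simp [Real.volume_Ioc]
    · rcases eq_or_ne d 0 with rfl | hd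
      · rw [abs_zero, ENNReal.ofReal_zero, ENNReal.div_zero (by positivity)]
        exact le_top
      · have habs : (0:ℝ) < |d| := abs_pos.mpr hd
        calc volume ({θ : ℝ | |c + θ * d| ≤ ε} ∩ Ioc 0 1)
            ≤ volume {θ : ℝ | |c + θ * d| ≤ ε} := measure_mono inter_subset_left
          _ = volume ((· * d) ⁻¹' ((c + ·) ⁻¹' Icc (-ε) ε)) := by
              congr 1
              ext θ
              simp [abs_le, mem_preimage, mem_Icc]
              constructor
              · rintro ⟨h1, h2⟩; constructor <;> linarith
              · rintro ⟨h1, h2⟩; constructor <;> linarith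
          _ = ENNReal.ofReal |d⁻¹| * volume ((c + ·) ⁻¹' Icc (-ε) ε) :=
              Real.volume_preimage_mul_right hd _
          _ = ENNReal.ofReal |d⁻¹| * volume (Icc (-ε) ε) := by
              rw [measure_preimage_add]
          _ = ENNReal.ofReal (2*ε) / ENNReal.ofReal |d| := by
              rw [Real.volume_Icc, abs_inv,
                ENNReal.ofReal_inv_of_pos habs, mul_comm]
              rw [div_eq_mul_inv]
              congr 1
              ring_nf
  · have hempty : {θ : ℝ | |c + θ * d| ≤ ε} ∩ Ioc 0 1 = ∅ := by
      rw [eq_empty_iff_forall_notMem]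
      rintro θ ⟨h1, h2⟩
      simp only [mem_setOf_eq] at h1
      rw [mem_Ioc] at h2
      apply hcd
      have hθ : |θ| ≤ 1 := abs_le.mpr ⟨by linarith [h2.1], h2.2⟩
      calc |c| = |c + θ*d - θ*d| := by ring_nf
        _ ≤ |c + θ*d| + |θ*d| := abs_sub _ _
        _ ≤ ε + |θ| * |d| := by rw [abs_mul] at *; exact add_le_add h1 le_rfl
        _ ≤ ε + 1 * |d| := by
            apply add_le_add_right
            exact mul_le_mul_of_nonneg_right hθ (abs_nonneg d)
        _ = |d| + ε := by ring
    rw [hempty, if_neg hcd, measure_empty]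

lemma kernel_rep (μ₁ μ₂ : Measure ℝ) [IsFiniteMeasure μ₁] [IsFiniteMeasure μ₂] (θ : ℝ) :
    Measure.conv μ₁ (Measure.map (fun x : ℝ => θ * x) μ₂) =
      Measure.map (fun p : ℝ × ℝ => p.2 + θ * p.1) (μ₂.prod μ₁) := by
  rw [Measure.conv]
  have h1 : μ₁.prod (Measure.map (fun x : ℝ => θ * x) μ₂) =
      Measure.map (Prod.map (id : ℝ → ℝ) (fun x : ℝ => θ * x)) (μ₁.prod μ₂) := by
    rw [← Measure.map_prod_map _ _ measurable_id (by fun_prop), Measure.map_id]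
  rw [h1, Measure.map_map (by fun_prop) (by fun_prop)]
  have h2 : μ₁.prod μ₂ = Measure.map Prod.swap (μ₂.prod μ₁) := by
    rw [Measure.prod_swap]
  rw [h2, Measure.map_map (by fun_prop) measurable_swap]
  rfl

lemma key_bound_s5 {α : ℝ} (hα : 1/2 < α) (hα1 : α < 1) (μ₁ μ₂ : Measure ℝ)
    [IsFiniteMeasure μ₁] [IsFiniteMeasure μ₂]
    {C₁ C₂ : ℝ} (hC₁ : 0 < C₁) (hC₂ : 0 < C₂)
    (hH₁ : ∀ x r : ℝ, 0 ≤ r →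
      μ₁ (Metric.closedBall x r) ≤ ENNReal.ofReal (C₁ * min r 1 ^ α))
    (hH₂ : ∀ x r : ℝ, 0 ≤ r →
      μ₂ (Metric.closedBall x r) ≤ ENNReal.ofReal (C₂ * min r 1 ^ α)) :
    ∃ B : ℝ≥0∞, B ≠ ⊤ ∧ ∀ ε : ℝ, 0 < ε → ε ≤ 1 →
      ∫⁻ θ in Set.Ioc (0:ℝ) 1,
        ∫⁻ p, (μ₂.prod μ₁) {q : ℝ × ℝ | |q.2 + θ * q.1 - (p.2 + θ * p.1)| ≤ ε}
          ∂(μ₂.prod μ₁) ≤ B * ENNReal.ofReal ε := by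
  classical
  obtain ⟨B₂, hB₂fin, hB₂⟩ := phi_integral hα hα1 hC₂ hH₂
  set ν : Measure (ℝ × ℝ) := μ₂.prod μ₁ with hν
  refine ⟨ν univ * (ENNReal.ofReal C₁ * B₂), by finiteness, ?_⟩
  intro ε hε hε2
  set e : ℝ → ℝ × ℝ → ℝ := fun θ p => p.2 + θ * p.1 with he
  have hem : ∀ θ, Measurable (e θ) := fun θ => by fun_prop
  -- the if-bound function
  set W : ℝ → ℝ → ℝ≥0∞ := fun c d =>
    if |c| ≤ |d| + ε then min 1 (ENNReal.ofReal (2*ε) / ENNReal.ofReal |d|) else 0 with hW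
  calc ∫⁻ θ in Set.Ioc (0:ℝ) 1,
        ∫⁻ p, ν {q : ℝ × ℝ | |q.2 + θ * q.1 - (p.2 + θ * p.1)| ≤ ε} ∂ν
      = ∫⁻ θ in Ioc (0:ℝ) 1, ∫⁻ p, ν {q | |e θ q - e θ p| ≤ ε} ∂ν := rfl
    _ = ∫⁻ p, (∫⁻ θ in Ioc (0:ℝ) 1, ν {q | |e θ q - e θ p| ≤ ε}) ∂ν := by
        apply lintegral_lintegral_swap
        have hS : MeasurableSet {z : (ℝ × (ℝ × ℝ)) × (ℝ × ℝ) |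
            |e z.1.1 z.2 - e z.1.1 z.1.2| ≤ ε} :=
          measurableSet_le (by fun_prop) measurable_const
        exact (measurable_measure_prodMk_left (ν := ν) hS).aemeasurable
    _ = ∫⁻ p, ∫⁻ q, (volume : Measure ℝ).restrict (Ioc (0:ℝ) 1)
          {θ : ℝ | |e θ q - e θ p| ≤ ε} ∂ν ∂ν := by
        apply lintegral_congr fun p => ?_
        have hSp : MeasurableSet {z : ℝ × (ℝ × ℝ) | |e z.1 z.2 - e z.1 p| ≤ ε} :=
          measurableSet_le (by fun_prop) measurable_const
        calc ∫⁻ θ in Ioc (0:ℝ) 1, ν {q | |e θ q - e θ p| ≤ ε}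
            = (((volume : Measure ℝ).restrict (Ioc (0:ℝ) 1)).prod ν)
                {z : ℝ × (ℝ × ℝ) | |e z.1 z.2 - e z.1 p| ≤ ε} :=
              (Measure.prod_apply hSp).symm
          _ = ∫⁻ q, (volume : Measure ℝ).restrict (Ioc (0:ℝ) 1)
                {θ : ℝ | |e θ q - e θ p| ≤ ε} ∂ν :=
              Measure.prod_apply_symm hSp
    _ ≤ ∫⁻ p, ∫⁻ q, W (q.2 - p.2) (q.1 - p.1) ∂ν ∂ν := by
        apply lintegral_mono fun p => lintegral_mono fun q => ?_
        have hset : {θ : ℝ | |e θ q - e θ p| ≤ ε}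
            = {θ : ℝ | |(q.2 - p.2) + θ * (q.1 - p.1)| ≤ ε} := by
          ext θ
          simp only [mem_setOf_eq, he]
          ring_nf
        rw [hset, hW]
        exact theta_bound hε _ _
    _ ≤ ∫⁻ p, ENNReal.ofReal C₁ * ((B₂ * ENNReal.ofReal ε)) ∂ν := by
        apply lintegral_mono fun p => ?_
        have hqm : Measurable fun q : ℝ × ℝ => W (q.2 - p.2) (q.1 - p.1) := by
          rw [hW]
          apply Measurable.ite
          · exact measurableSet_le (by fun_prop) (by fun_prop)
          · apply Measurable.min measurable_const
            apply Measurable.div measurable_const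
            exact ENNReal.measurable_ofReal.comp (by fun_prop)
          · exact measurable_const
        calc ∫⁻ q, W (q.2 - p.2) (q.1 - p.1) ∂ν
            = ∫⁻ b', ∫⁻ a', W (a' - p.2) (b' - p.1) ∂μ₁ ∂μ₂ :=
              lintegral_prod _ hqm.aemeasurable
          _ ≤ ∫⁻ b', min 1 (ENNReal.ofReal (2*ε) / ENNReal.ofReal |b' - p.1|)
                * ENNReal.ofReal (C₁ * min (|b' - p.1| + ε) 1 ^ α) ∂μ₂ := by
              apply lintegral_mono fun b' => ?_
              set d : ℝ := b' - p.1 with hd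
              have hind : ∀ a' : ℝ, W (a' - p.2) d =
                  (Metric.closedBall p.2 (|d| + ε)).indicator
                    (fun _ => min 1 (ENNReal.ofReal (2*ε) / ENNReal.ofReal |d|)) a' := by
                intro a'
                rw [hW, indicator_apply]
                simp only [Metric.mem_closedBall, Real.dist_eq]
              calc ∫⁻ a', W (a' - p.2) d ∂μ₁
                  = ∫⁻ a', (Metric.closedBall p.2 (|d| + ε)).indicator
                      (fun _ => min 1 (ENNReal.ofReal (2*ε) / ENNReal.ofReal |d|)) a' ∂μ₁ :=
                    lintegral_congr hind
                _ = min 1 (ENNReal.ofReal (2*ε) / ENNReal.ofReal |d|)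
                      * μ₁ (Metric.closedBall p.2 (|d| + ε)) := by
                    rw [lintegral_indicator Metric.isClosed_closedBall.measurableSet,
                      setLIntegral_const]
                _ ≤ min 1 (ENNReal.ofReal (2*ε) / ENNReal.ofReal |d|)
                      * ENNReal.ofReal (C₁ * min (|d| + ε) 1 ^ α) := by
                    gcongr
                    exact hH₁ p.2 (|d| + ε) (by positivity)
          _ = ENNReal.ofReal C₁ * ∫⁻ b',
                min 1 (ENNReal.ofReal (2*ε) / ENNReal.ofReal |b' - p.1|)
                  * ENNReal.ofReal (min (|b' - p.1| + ε) 1 ^ α) ∂μ₂ := by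
              rw [← lintegral_const_mul' _ _ ENNReal.ofReal_ne_top]
              apply lintegral_congr fun b' => ?_
              rw [ENNReal.ofReal_mul hC₁.le]
              ring
          _ ≤ ENNReal.ofReal C₁ * (B₂ * ENNReal.ofReal ε) := by
              gcongr
              exact hB₂ ε hε hε2 p.1
    _ = ν univ * (ENNReal.ofReal C₁ * B₂) * ENNReal.ofReal ε := by
        rw [lintegral_const]
        ring

lemma ac_of_liminf {ρ : Measure ℝ} [IsFiniteMeasure ρ]
    (h : ∀ᵐ x ∂ρ, Filter.liminf (fun n : ℕ =>
      ρ (Metric.closedBall x ((1/2 : ℝ) ^ n)) / ENNReal.ofReal (2 * (1/2 : ℝ) ^ n))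
      Filter.atTop < ⊤) :
    ρ ≪ (volume : Measure ℝ) := by
  intro s hs
  set g : ℝ → ℝ≥0∞ := fun x => Filter.liminf (fun n : ℕ =>
      ρ (Metric.closedBall x ((1/2 : ℝ) ^ n)) / ENNReal.ofReal (2 * (1/2 : ℝ) ^ n))
      Filter.atTop with hg
  set T : Set ℝ := {x | g x < ⊤} with hT
  have hTc : ρ Tᶜ = 0 := by
    have h' := ae_iff.mp h
    rw [hT, compl_setOf]
    exact h'
  have key : ∀ m : ℕ, ρ (s ∩ {x | g x < m}) = 0 := by
    intro m
    set v := Besicovitch.vitaliFamily ρ with hv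
    set ν : Measure ℝ := (m : ℝ≥0∞) • volume with hν
    haveI : IsLocallyFiniteMeasure ν := by
      constructor
      intro x
      refine ⟨Metric.ball x 1, Metric.ball_mem_nhds x one_pos, ?_⟩
      rw [hν]
      simp only [Measure.smul_apply, smul_eq_mul]
      exact ENNReal.mul_lt_top (ENNReal.natCast_lt_top m)
        (lt_of_le_of_lt (measure_mono Metric.ball_subset_closedBall)
          (by rw [Real.volume_closedBall]; exact ENNReal.ofReal_lt_top))
    have hle : ρ (s ∩ {x | g x < m}) ≤ ν (s ∩ {x | g x < m}) := by
      apply v.measure_le_of_frequently_le ν Measure.AbsolutelyContinuous.rfl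
      intro x hx
      have hfreq : ∃ᶠ n in atTop,
          ρ (Metric.closedBall x ((1/2 : ℝ) ^ n)) / ENNReal.ofReal (2 * (1/2 : ℝ) ^ n)
            < m := frequently_lt_of_liminf_lt (by isBoundedDefault) hx.2
      have hfreq2 : ∃ᶠ n in atTop,
          ρ (Metric.closedBall x ((1/2 : ℝ) ^ n)) ≤ ν (Metric.closedBall x ((1/2 : ℝ) ^ n)) := by
        apply hfreq.mono
        intro n hn
        have hb0 : ENNReal.ofReal (2 * (1/2 : ℝ) ^ n) ≠ 0 :=
          ne_of_gt (ENNReal.ofReal_pos.mpr (by positivity))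
        rw [ENNReal.div_lt_iff (Or.inl hb0) (Or.inl ENNReal.ofReal_ne_top)] at hn
        rw [hν]
        simp only [Measure.smul_apply, smul_eq_mul]
        rw [Real.volume_closedBall]
        exact hn.le
      have htendsto : Tendsto (fun n : ℕ => ((1:ℝ)/2) ^ n) atTop (nhdsWithin 0 (Ioi 0)) := by
        apply tendsto_nhdsWithin_of_tendsto_nhds_of_eventually_within
        · exact tendsto_pow_atTop_nhds_zero_of_lt_one (by norm_num) (by norm_num)
        · exact Eventually.of_forall fun n => mem_Ioi.mpr (by positivity)
      have hfreq3 : ∃ᶠ r in nhdsWithin 0 (Ioi 0),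
          ρ (Metric.closedBall x r) ≤ ν (Metric.closedBall x r) :=
        htendsto.frequently hfreq2
      exact (Besicovitch.tendsto_filterAt ρ x).frequently hfreq3
    have hν0 : ν (s ∩ {x | g x < m}) = 0 := by
      rw [hν]
      simp only [Measure.smul_apply, smul_eq_mul]
      rw [measure_mono_null inter_subset_left hs, mul_zero]
    exact le_antisymm (hle.trans hν0.le) (zero_le)
  have hsT : ρ (s ∩ T) = 0 := by
    have hcover : s ∩ T ⊆ ⋃ m : ℕ, s ∩ {x | g x < m} := by
      rintro x ⟨hxs, hxT⟩
      obtain ⟨m, hm⟩ := ENNReal.exists_nat_gt hxT.ne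
      exact mem_iUnion.mpr ⟨m, hxs, hm⟩
    refine measure_mono_null hcover ?_
    exact measure_iUnion_null key
  refine le_antisymm ?_ (zero_le)
  calc ρ s ≤ ρ (s ∩ T) + ρ Tᶜ := by
        apply le_trans (measure_mono (?_ : s ⊆ (s ∩ T) ∪ Tᶜ)) (measure_union_le _ _)
        intro x hx
        by_cases hxT : x ∈ T
        · exact Or.inl ⟨hx, hxT⟩
        · exact Or.inr hxT
    _ = 0 := by rw [hsT, hTc, add_zero]

lemma main_aux (α : ℝ) (hα : 1/2 < α) (hα1 : α < 1) (μ₁ μ₂ : Measure ℝ)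
    [IsFiniteMeasure μ₁] [IsFiniteMeasure μ₂]
    (h₁ : UniformlyHolder α μ₁) (h₂ : UniformlyHolder α μ₂) :
    ∀ᵐ θ ∂((volume : Measure ℝ).restrict (Ioc (0:ℝ) 1)),
      (Measure.conv μ₁ (Measure.map (fun x : ℝ => θ * x) μ₂)) ≪ (volume : Measure ℝ) := by
  have hα0 : (0:ℝ) < α := by linarith
  obtain ⟨C₁, hC₁, hH₁⟩ := holder_ball hα0 h₁
  obtain ⟨C₂, hC₂, hH₂⟩ := holder_ball hα0 h₂
  obtain ⟨B, hBfin, hB⟩ := key_bound_s5 hα hα1 μ₁ μ₂ hC₁ hC₂ hH₁ hH₂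
  have hεn0 : ∀ n : ℕ, (0:ℝ) < (1/2 : ℝ) ^ n := fun n => by positivity
  have hεn1 : ∀ n : ℕ, ((1/2 : ℝ)) ^ n ≤ 1 := fun n =>
    pow_le_one₀ (by norm_num) (by norm_num)
  have hcn0 : ∀ n : ℕ, ENNReal.ofReal (2 * (1/2 : ℝ) ^ n) ≠ 0 :=
    fun n => ne_of_gt (ENNReal.ofReal_pos.mpr (by positivity))
  -- the kernel functions
  set ν : Measure (ℝ × ℝ) := μ₂.prod μ₁ with hν
  have hem : ∀ θ : ℝ, Measurable (fun p : ℝ × ℝ => p.2 + θ * p.1) := fun θ => by fun_prop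
  set h : ℕ → ℝ × (ℝ × ℝ) → ℝ≥0∞ := fun n z =>
    ν {q : ℝ × ℝ | |q.2 + z.1 * q.1 - (z.2.2 + z.1 * z.2.1)| ≤ (1/2 : ℝ) ^ n}
      / ENNReal.ofReal (2 * (1/2 : ℝ) ^ n) with hh
  have hhm : ∀ n, Measurable (h n) := by
    intro n
    have hSm : MeasurableSet {z : (ℝ × (ℝ × ℝ)) × (ℝ × ℝ) |
        |z.2.2 + z.1.1 * z.2.1 - (z.1.2.2 + z.1.1 * z.1.2.1)| ≤ (1/2 : ℝ) ^ n} :=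
      measurableSet_le (by fun_prop) measurable_const
    exact (measurable_measure_prodMk_left (ν := ν) hSm).div_const _
  set H : ℝ × (ℝ × ℝ) → ℝ≥0∞ := fun z => liminf (fun n => h n z) atTop with hHdef
  have hHm : Measurable H := Measurable.liminf fun n => hhm n
  set F : ℝ → ℝ≥0∞ := fun θ => ∫⁻ p, H (θ, p) ∂ν with hF
  have hFm : Measurable F := hHm.lintegral_prod_right'
  have hFint : ∫⁻ θ in Ioc (0:ℝ) 1, F θ ≤ B := by
    calc ∫⁻ θ in Ioc (0:ℝ) 1, F θ
        ≤ ∫⁻ θ in Ioc (0:ℝ) 1, liminf (fun n => ∫⁻ p, h n (θ, p) ∂ν) atTop := by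
          apply lintegral_mono fun θ => ?_
          exact lintegral_liminf_le fun n => (hhm n).comp (measurable_prodMk_left)
      _ ≤ liminf (fun n => ∫⁻ θ in Ioc (0:ℝ) 1, ∫⁻ p, h n (θ, p) ∂ν) atTop :=
          lintegral_liminf_le fun n => (hhm n).lintegral_prod_right'
      _ ≤ B := by
          have hbd : ∀ n : ℕ, ∫⁻ θ in Ioc (0:ℝ) 1, ∫⁻ p, h n (θ, p) ∂ν ≤ B := by
            intro n
            have hinner : ∀ θ : ℝ, ∫⁻ p, h n (θ, p) ∂ν =
                (∫⁻ p, ν {q : ℝ × ℝ | |q.2 + θ * q.1 - (p.2 + θ * p.1)| ≤ (1/2 : ℝ) ^ n} ∂ν)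
                  * (ENNReal.ofReal (2 * (1/2 : ℝ) ^ n))⁻¹ := by
              intro θ
              rw [← lintegral_mul_const' _ _ (by simp [hcn0 n])]
              apply lintegral_congr fun p => ?_
              simp only [hh]
              exact div_eq_mul_inv _ _
            calc ∫⁻ θ in Ioc (0:ℝ) 1, ∫⁻ p, h n (θ, p) ∂ν
                = (∫⁻ θ in Ioc (0:ℝ) 1, ∫⁻ p,
                    ν {q : ℝ × ℝ | |q.2 + θ * q.1 - (p.2 + θ * p.1)| ≤ (1/2 : ℝ) ^ n} ∂ν)
                    * (ENNReal.ofReal (2 * (1/2 : ℝ) ^ n))⁻¹ := by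
                  rw [← lintegral_mul_const' _ _ (by simp [hcn0 n])]
                  exact lintegral_congr fun θ => hinner θ
              _ ≤ (B * ENNReal.ofReal ((1/2 : ℝ) ^ n))
                    * (ENNReal.ofReal (2 * (1/2 : ℝ) ^ n))⁻¹ := by
                  gcongr
                  exact hB _ (hεn0 n) (hεn1 n)
              _ = B * (ENNReal.ofReal ((1/2 : ℝ) ^ n)
                    / ENNReal.ofReal (2 * (1/2 : ℝ) ^ n)) := by
                  rw [mul_assoc, ← div_eq_mul_inv]
              _ ≤ B * 1 := by
                  gcongr
                  apply ENNReal.div_le_of_le_mul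
                  rw [one_mul]
                  exact ENNReal.ofReal_le_ofReal (by nlinarith [hεn0 n])
              _ = B := mul_one B
          calc liminf (fun n => ∫⁻ θ in Ioc (0:ℝ) 1, ∫⁻ p, h n (θ, p) ∂ν) atTop
              ≤ liminf (fun _ : ℕ => B) atTop :=
                liminf_le_liminf (Eventually.of_forall hbd)
            _ = B := liminf_const B
  have hae : ∀ᵐ θ ∂((volume : Measure ℝ).restrict (Ioc (0:ℝ) 1)), F θ < ⊤ :=
    ae_lt_top hFm (lt_of_le_of_lt hFint hBfin.lt_top).ne
  filter_upwards [hae] with θ hθ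
  rw [kernel_rep μ₁ μ₂ θ]
  set κ : Measure ℝ := Measure.map (fun p : ℝ × ℝ => p.2 + θ * p.1) ν with hκ
  haveI : IsFiniteMeasure κ := by
    rw [hκ]
    exact Measure.isFiniteMeasure_map ν _
  have hxm : ∀ n : ℕ, Measurable fun x : ℝ => κ (Metric.closedBall x ((1/2 : ℝ) ^ n)) := by
    intro n
    have hfun : (fun x : ℝ => κ (Metric.closedBall x ((1/2 : ℝ) ^ n)))
        = fun x : ℝ => ν (Prod.mk x ⁻¹'
            {z : ℝ × (ℝ × ℝ) | |z.2.2 + θ * z.2.1 - z.1| ≤ (1/2 : ℝ) ^ n}) := by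
      funext x
      rw [hκ, Measure.map_apply (hem θ) Metric.isClosed_closedBall.measurableSet]
      congr 1
    rw [hfun]
    exact measurable_measure_prodMk_left (measurableSet_le (by fun_prop) measurable_const)
  have hlimm : Measurable fun x : ℝ => liminf (fun n : ℕ =>
      κ (Metric.closedBall x ((1/2 : ℝ) ^ n)) / ENNReal.ofReal (2 * (1/2 : ℝ) ^ n)) atTop :=
    Measurable.liminf fun n => (hxm n).div_const _
  apply ac_of_liminf
  apply ae_lt_top hlimm
  have claimA : ∫⁻ x, liminf (fun n : ℕ =>
      κ (Metric.closedBall x ((1/2 : ℝ) ^ n)) / ENNReal.ofReal (2 * (1/2 : ℝ) ^ n)) atTop ∂κ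
      = F θ := by
    rw [hκ, lintegral_map hlimm (hem θ)]
    apply lintegral_congr fun p => ?_
    simp only [hHdef, hh]
    congr 1
    funext n
    congr 1
    rw [Measure.map_apply (hem θ) Metric.isClosed_closedBall.measurableSet]
    congr 1
  rw [claimA]
  exact hθ.ne

/-- If `α > 1/2` and `μ₁, μ₂` are finite uniformly `α`-Hölder continuous
Borel measures on `ℝ`, then for Lebesgue-a.e. `θ ∈ (0,1]` the convolution
`μ₁ ∗ (S_θ μ₂)`, where `S_θ μ₂` is the pushforward of `μ₂` under `x ↦ θ x`, is
absolutely continuous with respect to Lebesgue measure. -/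
theorem conv_scaled_holder_ae_absolutelyContinuous
    (α : ℝ) (hα : 1/2 < α) (μ₁ μ₂ : Measure ℝ)
    [IsFiniteMeasure μ₁] [IsFiniteMeasure μ₂]
    (h₁ : UniformlyHolder α μ₁) (h₂ : UniformlyHolder α μ₂) :
    ∀ᵐ θ ∂((volume : Measure ℝ).restrict (Ioc (0:ℝ) 1)),
      (Measure.conv μ₁ (Measure.map (fun x : ℝ => θ * x) μ₂)) ≪ (volume : Measure ℝ) := by
  set β : ℝ := min α (3/4) with hβ
  have hβ1 : 1/2 < β := lt_min hα (by norm_num)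
  have hβ2 : β < 1 := lt_of_le_of_lt (min_le_right _ _) (by norm_num)
  have hβα : β ≤ α := min_le_left _ _
  have transfer : ∀ μ : Measure ℝ, UniformlyHolder α μ → UniformlyHolder β μ := by
    rintro μ ⟨C, hC, hH⟩
    refine ⟨C, hC, fun a b hab hba => ?_⟩
    refine (hH a b hab hba).trans (ENNReal.ofReal_le_ofReal ?_)
    apply mul_le_mul_of_nonneg_left _ hC.le
    rcases eq_or_lt_of_le (sub_nonneg.mpr hab) with h0 | h0
    · rw [← h0, Real.zero_rpow (by linarith : α ≠ 0), Real.zero_rpow (by linarith : β ≠ 0)]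
    · exact Real.rpow_le_rpow_of_exponent_ge h0 hba.le hβα
  exact main_aux β hβ1 hβ2 μ₁ μ₂ (transfer μ₁ h₁) (transfer μ₂ h₂)
end
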